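/- For any finite group G and positive integer k, d_k(G) <= (k - 1) f(G) + d(G). -/

import Mathlib

open List Subgroup

/-- The set of all products of the terms of `S` in all orders. -/
def PiSet {G : Type*} [Group G] (S : List G) : Set G :=
  {g | ∃ l : List G, l.Perm S ∧ l.prod = g}

/-- `S` is a product-one sequence if `1 ∈ Π(S)`. -/
def IsProdOne {G : Type*} [Group G] (S : List G) : Prop :=
  (1 : G) ∈ PiSet S

/-- The Davenport constant `d(G)`: the smallest `m` such that every sequence of
length `m` over `G` contains a nonempty product-one subsequence. -/
noncomputable def dC (G : Type*) [Group G] : ℕ :=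
  sInf {m | 0 < m ∧ ∀ S : List G, S.length = m →
    ∃ T : List G, T ≠ [] ∧ T.Sublist S ∧ IsProdOne T}

/-- `e(G)`: the smallest `m` such that every nonempty product-one sequence over `G`
contains a nonempty product-one subsequence of length at most `m`. -/
noncomputable def eC (G : Type*) [Group G] : ℕ :=
  sInf {m | 0 < m ∧ ∀ S : List G, S ≠ [] → IsProdOne S →
    ∃ T : List G, T ≠ [] ∧ T.Sublist S ∧ T.length ≤ m ∧ IsProdOne T}

/-- `f(G)`: the smallest `m` such that every sequence of length `d(G)` over `G`
contains a nonempty product-one subsequence of length at most `m`. -/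
noncomputable def fC (G : Type*) [Group G] : ℕ :=
  sInf {m | 0 < m ∧ ∀ S : List G, S.length = dC G →
    ∃ T : List G, T ≠ [] ∧ T.Sublist S ∧ T.length ≤ m ∧ IsProdOne T}

/-- The `k`-th Davenport constant `d_k(G)`: the smallest `m` such that every sequence of
length `m` over `G` contains `k` pairwise disjoint nonempty product-one subsequences. -/
noncomputable def dkC (G : Type*) [Group G] (k : ℕ) : ℕ :=
  sInf {m | 0 < m ∧ ∀ S : List G, S.length = m →
    ∃ Ts : List (List G), Ts.length = k ∧ (∀ T ∈ Ts, T ≠ [] ∧ IsProdOne T) ∧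
      (Ts.flatten : Multiset G) ≤ (S : Multiset G)}

/-- Equal prefix products yield a nonempty product-one contiguous subsequence. -/
lemma segment_prod_one {G : Type*} [Group G] (S : List G) (i j : ℕ) (hij : i < j)
    (hj : j ≤ S.length) (h : (S.take i).prod = (S.take j).prod) :
    ∃ T : List G, T ≠ [] ∧ T.Sublist S ∧ IsProdOne T := by
  refine ⟨(S.drop i).take (j - i), ?_, ?_, ?_⟩
  · have : ((S.drop i).take (j - i)).length = j - i := by
      rw [List.length_take, List.length_drop]
      omega
    intro hnil
    rw [hnil] at this
    simp at this
    omega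
  · exact ((S.drop i).take_sublist _).trans (S.drop_sublist i)
  · refine ⟨(S.drop i).take (j - i), List.Perm.refl _, ?_⟩
    have hjj : j = i + (j - i) := by omega
    have : S.take j = S.take i ++ (S.drop i).take (j - i) := by
      rw [hjj, List.take_add]
      congr 2
      omega
    rw [this, List.prod_append] at h
    exact (mul_left_cancel (a := (S.take i).prod) (by rw [mul_one]; exact h)).symm

lemma dC_set_nonempty (G : Type*) [Group G] [Finite G] :
    ∃ m, 0 < m ∧ ∀ S : List G, S.length = m →
      ∃ T : List G, T ≠ [] ∧ T.Sublist S ∧ IsProdOne T := by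
  refine ⟨Nat.card G, Nat.card_pos, fun S hS => ?_⟩
  have := Fintype.ofFinite G
  have hcard : Fintype.card G < Fintype.card (Fin (Nat.card G + 1)) := by
    simp [Nat.card_eq_fintype_card]
  obtain ⟨a, b, hab, heq⟩ :=
    Fintype.exists_ne_map_eq_of_card_lt (fun i : Fin (Nat.card G + 1) => (S.take i).prod) hcard
  have ha := a.is_lt
  have hb := b.is_lt
  rcases lt_or_gt_of_ne (fun h => hab (Fin.ext h) : (a : ℕ) ≠ b) with h | h
  · exact segment_prod_one S a b h (by omega) heq
  · exact segment_prod_one S b a h (by omega) heq.symm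

lemma dC_spec (G : Type*) [Group G] [Finite G] :
    0 < dC G ∧ ∀ S : List G, S.length = dC G →
      ∃ T : List G, T ≠ [] ∧ T.Sublist S ∧ IsProdOne T :=
  Nat.sInf_mem (dC_set_nonempty G)

lemma fC_spec (G : Type*) [Group G] [Finite G] :
    0 < fC G ∧ ∀ S : List G, S.length = dC G →
      ∃ T : List G, T ≠ [] ∧ T.Sublist S ∧ T.length ≤ fC G ∧ IsProdOne T := by
  apply Nat.sInf_mem (s := {m | 0 < m ∧ ∀ S : List G, S.length = dC G →
    ∃ T : List G, T ≠ [] ∧ T.Sublist S ∧ T.length ≤ m ∧ IsProdOne T})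
  refine ⟨dC G, (dC_spec G).1, fun S hS => ?_⟩
  obtain ⟨T, hT1, hT2, hT3⟩ := (dC_spec G).2 S hS
  exact ⟨T, hT1, hT2, hS ▸ hT2.length_le, hT3⟩

lemma main_aux (G : Type*) [Group G] [Finite G] :
    ∀ n : ℕ, ∀ M : Multiset G, n * fC G + dC G ≤ Multiset.card M →
      ∃ Ts : List (List G), Ts.length = n + 1 ∧ (∀ T ∈ Ts, T ≠ [] ∧ IsProdOne T) ∧
        (Ts.flatten : Multiset G) ≤ M := by
  classical
  intro n
  induction n with
  | zero =>
    intro M hM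
    simp only [zero_mul, zero_add] at hM
    set L := M.toList with hL
    have hlen : L.length = Multiset.card M := Multiset.length_toList M
    have hS' : (L.take (dC G)).length = dC G := by
      rw [List.length_take]; omega
    obtain ⟨T, hT1, hT2, hT3⟩ := (dC_spec G).2 (L.take (dC G)) hS'
    refine ⟨[T], rfl, by simpa using ⟨hT1, hT3⟩, ?_⟩
    have hsub : T.Sublist L := hT2.trans (L.take_sublist _)
    have : (T : Multiset G) ≤ (L : Multiset G) := Multiset.coe_le.mpr hsub.subperm
    rw [hL, Multiset.coe_toList] at this
    simpa using this
  | succ n ih =>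
    intro M hM
    have hd : dC G ≤ Multiset.card M := by
      have hf := (fC_spec G).1
      nlinarith [hM]
    set L := M.toList with hL
    have hlen : L.length = Multiset.card M := Multiset.length_toList M
    have hS' : (L.take (dC G)).length = dC G := by
      rw [List.length_take]; omega
    obtain ⟨T, hT1, hT2, hTf, hT3⟩ := (fC_spec G).2 (L.take (dC G)) hS'
    have hsub : T.Sublist L := hT2.trans (L.take_sublist _)
    have hTM : (T : Multiset G) ≤ M := by
      have : (T : Multiset G) ≤ (L : Multiset G) := Multiset.coe_le.mpr hsub.subperm
      rwa [hL, Multiset.coe_toList] at this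
    have hcard' : n * fC G + dC G ≤ Multiset.card (M - (T : Multiset G)) := by
      have hc : Multiset.card (M - (T : Multiset G)) =
          Multiset.card M - Multiset.card (T : Multiset G) := by
        rw [Multiset.card_sub hTM]
      have hTl : Multiset.card (T : Multiset G) = T.length := Multiset.coe_card T
      have hmul : (n + 1) * fC G = n * fC G + fC G := by ring
      omega
    obtain ⟨Ts, hTs1, hTs2, hTs3⟩ := ih (M - (T : Multiset G)) hcard'
    refine ⟨T :: Ts, by simp [hTs1], ?_, ?_⟩
    · rintro U hU
      rcases List.mem_cons.mp hU with rfl | hU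
      · exact ⟨hT1, hT3⟩
      · exact hTs2 U hU
    · have : ((T :: Ts).flatten : Multiset G) = (T : Multiset G) + (Ts.flatten : Multiset G) := by
        simp
      rw [this]
      exact (le_tsub_iff_left hTM).mp hTs3

/-- For any finite group `G` and positive integer `k`, `d_k(G) ≤ (k - 1) f(G) + d(G)`. -/
theorem dk_le (G : Type*) [Group G] [Finite G] (k : ℕ) (hk : 0 < k) :
    dkC G k ≤ (k - 1) * fC G + dC G := by
  obtain ⟨n, rfl⟩ : ∃ n, k = n + 1 := ⟨k - 1, by omega⟩
  have hmem : (n * fC G + dC G) ∈ {m | 0 < m ∧ ∀ S : List G, S.length = m →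
      ∃ Ts : List (List G), Ts.length = n + 1 ∧ (∀ T ∈ Ts, T ≠ [] ∧ IsProdOne T) ∧
        (Ts.flatten : Multiset G) ≤ (S : Multiset G)} := by
    refine ⟨by have := (dC_spec G).1; omega, fun S hS => ?_⟩
    exact main_aux G n (S : Multiset G) (by rw [Multiset.coe_card, hS])
  have := Nat.sInf_le hmem
  simp only [Nat.add_sub_cancel]
  exact this
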